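/- For a solution ξ of the NHP equation ξ⃛ = ξ̈ × ξ on ℝ³ and a curve g: ℝ → SO(3) with g^{-1}ġ = ξ^ (hat map), the vector J(t) := g(t)·(-ξ̈(t)) ∈ ℝ³ is constant in time. -/

import Mathlib

open Matrix

attribute [local instance] Matrix.normedAddCommGroup Matrix.normedSpace

/-- The hat map `ℝ³ → 𝔰𝔬(3)`. -/
def hat (ξ : Fin 3 → ℝ) : Matrix (Fin 3) (Fin 3) ℝ :=
  !![0, -ξ 2, ξ 1; ξ 2, 0, -ξ 0; -ξ 1, ξ 0, 0]

/-- for a solution `ξ` of the NHP equation `ξ⃛ = ξ̈ × ξ` and a curve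
`g : ℝ → SO(3)` with `g⁻¹ġ = ξ^`, the spatial momentum `J(t) = g(t)·(-ξ̈(t))` is constant. -/
theorem stmt13 (ξ ξ' ξ'' ξ''' : ℝ → Fin 3 → ℝ) (g : ℝ → Matrix (Fin 3) (Fin 3) ℝ)
    (hSO : ∀ t, (g t)ᵀ * g t = 1 ∧ (g t).det = 1)
    (hg : ∀ t, HasDerivAt g (g t * hat (ξ t)) t)
    (h1 : ∀ t, HasDerivAt ξ (ξ' t) t)
    (h2 : ∀ t, HasDerivAt ξ' (ξ'' t) t)
    (h3 : ∀ t, HasDerivAt ξ'' (ξ''' t) t)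
    (hNHP : ∀ t, ξ''' t = crossProduct (ξ'' t) (ξ t)) :
    ∀ s t : ℝ, (g s).mulVec (-(ξ'' s)) = (g t).mulVec (-(ξ'' t)) := by
  -- entrywise derivatives of g
  have hgij : ∀ (t : ℝ) (i j : Fin 3), HasDerivAt (fun t => g t i j)
      ((g t * hat (ξ t)) i j) t := by
    intro t i j
    exact hasDerivAt_pi.1 (hasDerivAt_pi.1 (hg t) i) j
  have hvj : ∀ (t : ℝ) (j : Fin 3), HasDerivAt (fun t => ξ'' t j) (ξ''' t j) t := by
    intro t j
    exact hasDerivAt_pi.1 (h3 t) j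
  -- the spatial momentum
  set J : ℝ → Fin 3 → ℝ := fun t => (g t).mulVec (-(ξ'' t)) with hJ
  have hderiv : ∀ t, HasDerivAt J 0 t := by
    intro t
    have key : ∀ i, HasDerivAt (fun t => J t i)
        (∑ j, ((g t * hat (ξ t)) i j * (-(ξ'' t j)) + g t i j * (-(ξ''' t j)))) t := by
      intro i
      have : ∀ j : Fin 3, HasDerivAt (fun t => g t i j * (-(ξ'' t j)))
          ((g t * hat (ξ t)) i j * (-(ξ'' t j)) + g t i j * (-(ξ''' t j))) t := by
        intro j
        exact (hgij t i j).mul ((hvj t j).neg)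
      have hsum := HasDerivAt.sum (fun j (_ : j ∈ Finset.univ) => this j)
      exact hsum
    have hzero : ∀ i, (∑ j, ((g t * hat (ξ t)) i j * (-(ξ'' t j)) + g t i j * (-(ξ''' t j)))) = 0 := by
      intro i
      have hx := hNHP t
      have hx0 := congrFun hx 0
      have hx1 := congrFun hx 1
      have hx2 := congrFun hx 2
      simp only [crossProduct] at hx0 hx1 hx2
      fin_cases i <;>
        simp [Fin.sum_univ_three, hat, Matrix.mul_apply,
          hx0, hx1, hx2] <;>
        try ring
    refine hasDerivAt_pi.2 fun i => ?_
    have := key i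
    rw [hzero i] at this
    simpa using this
  intro s t
  have : ∀ u : ℝ, J u = J 0 := by
    intro u
    have hf : ∀ x : ℝ, HasFDerivAt J (0 : ℝ →L[ℝ] (Fin 3 → ℝ)) x := by
      intro x
      have h := (hderiv x).hasFDerivAt
      rwa [show ContinuousLinearMap.toSpanSingleton ℝ (0 : Fin 3 → ℝ)
        = (0 : ℝ →L[ℝ] (Fin 3 → ℝ)) by ext v; simp] at h
    have := is_const_of_fderiv_eq_zero (𝕜 := ℝ) (fun x => (hf x).differentiableAt)
      (fun x => (hf x).fderiv) u 0
    exact this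
  rw [show (g s).mulVec (-(ξ'' s)) = J s from rfl, show (g t).mulVec (-(ξ'' t)) = J t from rfl,
    this s, this t]
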